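/- arXiv:1602.00403 — 7 statements merged into one kernel-verified Lean document; each statement's English description precedes it below -/
import Mathlib

section
/- Let H be a group, μ a symmetric probability measure on H with finite support, and A a symmetric subset of H. If l > l₀ are two positive integers, then μ^(2l₀)(A·A) ≥ (μ^(l)(A))², where μ^(m) denotes the m-fold convolution of μ and A·A = {a₁a₂ : a₁, a₂ ∈ A}. -/
open Finset
open scoped Pointwise Classical

/-- The mass that a finitely supported measure (an element of the monoid algebra,
whose multiplication is convolution) assigns to a set. -/
noncomputable def massOn {H : Type*} [Group H] (μ : MonoidAlgebra ℝ H) (A : Set H) : ℝ :=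
  ∑ x ∈ μ.coeff.support, if x ∈ A then μ.coeff x else 0

section aux
variable {H : Type*} [Group H]

lemma massOn_eq_sum (f : MonoidAlgebra ℝ H) (A : Set H) :
    massOn f A = f.coeff.sum (fun x v => if x ∈ A then v else 0) := rfl

lemma massOn_mul (f g : MonoidAlgebra ℝ H) (A : Set H) :
    massOn (f * g) A =
      ∑ a ∈ f.coeff.support, ∑ b ∈ g.coeff.support, if a * b ∈ A then f.coeff a * g.coeff b else 0 := by
  rw [massOn_eq_sum, MonoidAlgebra.mul_def]
  simp only [MonoidAlgebra.coeff_finsuppSum, MonoidAlgebra.coeff_single]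
  rw [Finsupp.sum_sum_index (fun a => by simp) (fun a b c => by split <;> simp)]
  refine Finset.sum_congr rfl fun a _ => ?_
  dsimp only
  rw [Finsupp.sum_sum_index (fun a => by simp) (fun a b c => by split <;> simp)]
  refine Finset.sum_congr rfl fun b _ => ?_
  dsimp only
  rw [Finsupp.sum_single_index (by simp)]

lemma pow_coeff_nonneg (μ : MonoidAlgebra ℝ H) (hpos : ∀ g : H, 0 ≤ μ.coeff g) (m : ℕ) :
    ∀ g : H, 0 ≤ (μ ^ m).coeff g := by
  induction m with
  | zero =>
    intro g
    rw [pow_zero]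
    simp [MonoidAlgebra.one_def, MonoidAlgebra.coeff_single, Finsupp.single_apply]
    split <;> norm_num
  | succ n ih =>
    intro g
    rw [pow_succ, MonoidAlgebra.coeff_mul]
    refine Finset.sum_nonneg fun a _ => Finset.sum_nonneg fun b _ => ?_
    dsimp only
    split
    · exact mul_nonneg (ih a) (hpos b)
    · exact le_refl _

lemma pow_total (μ : MonoidAlgebra ℝ H) (hprob : ∑ x ∈ μ.coeff.support, μ.coeff x = 1) (m : ℕ) :
    ∑ x ∈ (μ ^ m).coeff.support, (μ ^ m).coeff x = 1 := by
  have key : ∀ f : MonoidAlgebra ℝ H,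
      MonoidAlgebra.lift ℝ ℝ H 1 f = ∑ x ∈ f.coeff.support, f.coeff x := by
    intro f
    rw [MonoidAlgebra.lift_apply]
    simp [Finsupp.sum]
  rw [← key, map_pow, key, hprob, one_pow]

lemma mul_symm_apply (f g : MonoidAlgebra ℝ H)
    (hf : ∀ x : H, f.coeff x⁻¹ = f.coeff x) (hg : ∀ x : H, g.coeff x⁻¹ = g.coeff x) (x : H) :
    (f * g).coeff x⁻¹ = (g * f).coeff x := by
  classical
  rw [MonoidAlgebra.coeff_mul, MonoidAlgebra.coeff_mul]
  simp only [Finsupp.sum]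
  rw [Finset.sum_comm]
  refine Finset.sum_equiv (Equiv.inv H)
    (fun b => by simp [Finsupp.mem_support_iff, hg]) (fun b hb => ?_)
  refine Finset.sum_equiv (Equiv.inv H)
    (fun a => by simp [Finsupp.mem_support_iff, hf]) (fun a ha => ?_)
  simp only [Equiv.inv_apply]
  have hcond : (a * b = x⁻¹) ↔ (b⁻¹ * a⁻¹ = x) := by
    rw [← mul_inv_rev, inv_eq_iff_eq_inv, eq_comm]
  rw [hf a, hg b, mul_comm (g.coeff b) (f.coeff a)]
  exact if_congr hcond rfl rfl

lemma pow_symm (μ : MonoidAlgebra ℝ H) (hsymm : ∀ g : H, μ.coeff g⁻¹ = μ.coeff g) (m : ℕ) :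
    ∀ g : H, (μ ^ m).coeff g⁻¹ = (μ ^ m).coeff g := by
  induction m with
  | zero =>
    intro g
    rw [pow_zero]
    simp [MonoidAlgebra.one_def, MonoidAlgebra.coeff_single, Finsupp.single_apply, eq_comm, inv_eq_one]
  | succ n ih =>
    intro g
    calc (μ ^ (n+1)).coeff g⁻¹ = (μ ^ n * μ).coeff g⁻¹ := by rw [pow_succ]
      _ = (μ * μ ^ n).coeff g := mul_symm_apply _ _ ih hsymm g
      _ = (μ ^ (n+1)).coeff g := by rw [← pow_succ']

end aux

/-- Let `H` be a group, `μ` a symmetric probability measure on `H` with finite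
support, and `A` a symmetric subset of `H`. If `l > l₀` are positive integers, then
`μ^(2l₀)(A·A) ≥ (μ^(l)(A))²`. -/
theorem stmt0 {H : Type*} [Group H] (μ : MonoidAlgebra ℝ H)
    (hpos : ∀ g : H, 0 ≤ μ.coeff g)
    (hprob : ∑ x ∈ μ.coeff.support, μ.coeff x = 1)
    (hsymm : ∀ g : H, μ.coeff g⁻¹ = μ.coeff g)
    (A : Set H) (hA : A⁻¹ = A)
    (l l₀ : ℕ) (hl₀ : 0 < l₀) (hll : l₀ < l) :
    (massOn (μ ^ l) A) ^ 2 ≤ massOn (μ ^ (2 * l₀)) (A * A) := by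
  obtain ⟨k, hk⟩ : ∃ k, l = k + l₀ := ⟨l - l₀, by omega⟩
  set κ := μ ^ l₀ with hκdef
  set ν := μ ^ k with hνdef
  have hκpos : ∀ g, 0 ≤ κ.coeff g := pow_coeff_nonneg μ hpos l₀
  have hκsymm : ∀ g, κ.coeff g⁻¹ = κ.coeff g := pow_symm μ hsymm l₀
  have hνpos : ∀ g, 0 ≤ ν.coeff g := pow_coeff_nonneg μ hpos k
  have hνtot : ∑ x ∈ ν.coeff.support, ν.coeff x = 1 := pow_total μ hprob k
  set F : H → ℝ := fun a => ∑ b ∈ κ.coeff.support, if a * b ∈ A then κ.coeff b else 0 with hF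
  set M := massOn (μ ^ (2 * l₀)) (A * A) with hMdef
  have hMeq : M = ∑ u ∈ κ.coeff.support, ∑ v ∈ κ.coeff.support,
      if u * v ∈ A * A then κ.coeff u * κ.coeff v else 0 := by
    rw [hMdef, two_mul, pow_add, massOn_mul, hκdef]
  have hMnonneg : ∀ u v : H, (0:ℝ) ≤ if u * v ∈ A * A then κ.coeff u * κ.coeff v else 0 := by
    intro u v
    split
    · exact mul_nonneg (hκpos u) (hκpos v)
    · exact le_refl _
  have hFnonneg : ∀ a, 0 ≤ F a := by
    intro a
    refine Finset.sum_nonneg fun b _ => ?_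
    split
    · exact hκpos b
    · exact le_refl _
  have h1 : massOn (μ ^ l) A = ∑ a ∈ ν.coeff.support, ν.coeff a * F a := by
    rw [hk, pow_add, ← hνdef, ← hκdef, massOn_mul]
    refine Finset.sum_congr rfl fun a _ => ?_
    rw [hF, Finset.mul_sum]
    refine Finset.sum_congr rfl fun b _ => ?_
    split <;> simp
  have h2 : (∑ a ∈ ν.coeff.support, ν.coeff a * F a) ^ 2 ≤ ∑ a ∈ ν.coeff.support, ν.coeff a * F a ^ 2 := by
    have key := Finset.sum_mul_sq_le_sq_mul_sq ν.coeff.support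
      (fun a => Real.sqrt (ν.coeff a)) (fun a => Real.sqrt (ν.coeff a) * F a)
    have e1 : ∀ a, Real.sqrt (ν.coeff a) * (Real.sqrt (ν.coeff a) * F a) = ν.coeff a * F a := by
      intro a
      rw [← mul_assoc, Real.mul_self_sqrt (hνpos a)]
    have e2 : ∀ a, Real.sqrt (ν.coeff a) ^ 2 = ν.coeff a := fun a => Real.sq_sqrt (hνpos a)
    have e3 : ∀ a, (Real.sqrt (ν.coeff a) * F a) ^ 2 = ν.coeff a * F a ^ 2 := by
      intro a
      rw [mul_pow, e2]
    simp only [e1, e2, e3] at key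
    rwa [hνtot, one_mul] at key
  have h3 : ∀ a : H, F a ^ 2 ≤ M := by
    intro a
    rw [sq, hF, Finset.sum_mul_sum, hMeq]
    have hre : (∑ b ∈ κ.coeff.support, ∑ c ∈ κ.coeff.support,
          (if a * b ∈ A then κ.coeff b else 0) * (if a * c ∈ A then κ.coeff c else 0))
        = ∑ u ∈ κ.coeff.support, ∑ c ∈ κ.coeff.support,
          (if a * u⁻¹ ∈ A then κ.coeff u⁻¹ else 0) * (if a * c ∈ A then κ.coeff c else 0) := by
      refine Finset.sum_equiv (Equiv.inv H)
        (fun b => by simp [Finsupp.mem_support_iff, hκsymm]) (fun b hb => ?_)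
      simp only [Equiv.inv_apply, inv_inv]
    rw [hre]
    refine Finset.sum_le_sum fun u _ => Finset.sum_le_sum fun v _ => ?_
    by_cases h1' : a * u⁻¹ ∈ A
    · by_cases h2' : a * v ∈ A
      · have hmem : u * v ∈ A * A := by
          have hinv : (a * u⁻¹)⁻¹ ∈ A := by
            rw [← hA]
            exact Set.inv_mem_inv.mpr h1'
          have := Set.mul_mem_mul hinv h2'
          have heq : (a * u⁻¹)⁻¹ * (a * v) = u * v := by
            rw [mul_inv_rev, inv_inv]
            group
          rwa [heq] at this
        rw [if_pos h1', if_pos h2', if_pos hmem, hκsymm u]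
      · rw [if_neg h2', mul_zero]
        exact hMnonneg u v
    · rw [if_neg h1', zero_mul]
      exact hMnonneg u v
  calc (massOn (μ ^ l) A) ^ 2 = (∑ a ∈ ν.coeff.support, ν.coeff a * F a) ^ 2 := by rw [h1]
    _ ≤ ∑ a ∈ ν.coeff.support, ν.coeff a * F a ^ 2 := h2
    _ ≤ ∑ a ∈ ν.coeff.support, ν.coeff a * M :=
        Finset.sum_le_sum fun a _ => mul_le_mul_of_nonneg_left (h3 a) (hνpos a)
    _ = M := by rw [← Finset.sum_mul, hνtot, one_mul]
end

section
/- Let T be a rooted tree where each vertex has k children and with n levels, let T^(n) be its n-th generation, and A ⊆ T^(n). Then there exist a power of 2, k', and a subset A' ⊆ A such that: (1) for every x in the (n−1)-st generation that is an ancestor of some element of A', the number of children of x lying in A' equals k'; and (2) |A'| ≥ |A|/(2 log₂ k). -/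
open Finset
open scoped Classical

/-- In the rooted `k`-regular tree of depth `n`, vertices at level `n` are identified with
functions `Fin n → Fin k`; `treeRes` is the projection to the level-`m` ancestor. -/
def treeRes (k n m : ℕ) (h : m ≤ n) (v : Fin n → Fin k) : Fin m → Fin k :=
  fun j => v (Fin.castLE h j)

/-- Choose a subset of `s` of cardinality `m` (or `∅` if `s` is too small). -/
noncomputable def subChoose {α : Type*} (s : Finset α) (m : ℕ) : Finset α :=
  if h : m ≤ s.card then (Finset.exists_subset_card_eq h).choose else ∅

lemma subChoose_subset {α : Type*} (s : Finset α) (m : ℕ) : subChoose s m ⊆ s := by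
  unfold subChoose
  split_ifs with h
  · exact (Finset.exists_subset_card_eq h).choose_spec.1
  · exact Finset.empty_subset s

lemma subChoose_card {α : Type*} (s : Finset α) (m : ℕ) :
    (subChoose s m).card = if m ≤ s.card then m else 0 := by
  unfold subChoose
  split_ifs with h
  · exact (Finset.exists_subset_card_eq h).choose_spec.2
  · simp

lemma nat_le_sum_pow (m : ℕ) : ∀ s : ℕ, s < 2 ^ m →
    s ≤ ∑ i ∈ Finset.range m, if 2 ^ i ≤ s then 2 ^ i else 0 := by
  induction m with
  | zero => intro s hs; simpa using Nat.lt_one_iff.mp hs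
  | succ m ih =>
    intro s hs
    rw [Finset.sum_range_succ]
    have hp : 2 ^ (m + 1) = 2 ^ m + 2 ^ m := by rw [pow_succ]; omega
    by_cases h : 2 ^ m ≤ s
    · have h1 : s - 2 ^ m < 2 ^ m := by omega
      have h2 := ih (s - 2 ^ m) h1
      have h3 : (∑ i ∈ Finset.range m, if 2 ^ i ≤ s - 2 ^ m then 2 ^ i else 0)
          ≤ ∑ i ∈ Finset.range m, if 2 ^ i ≤ s then 2 ^ i else 0 :=
        Finset.sum_le_sum (fun i _ => by split_ifs <;> omega)
      simp only [if_pos h]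
      omega
    · have h2 := ih s (by omega)
      simp only [if_neg h]
      omega

/-- Let `T` be the rooted tree where each vertex has `k` children, with `n`
levels, and `A ⊆ T^(n)`.  Then there are a power of two `k' = 2^i` and `A' ⊆ A` such that every
vertex at level `n-1` that is an ancestor of some element of `A'` has exactly `k'` children
in `A'`, and `|A'| ≥ |A| / (2 log₂ k)`. -/
theorem stmt3 (k n : ℕ) (hk : 0 < k) (hn : 0 < n)
    (A : Finset (Fin n → Fin k)) :
    ∃ (i : ℕ) (A' : Finset (Fin n → Fin k)), A' ⊆ A ∧
      (∀ a ∈ A',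
        (A'.filter (fun b =>
          treeRes k n (n - 1) (Nat.sub_le n 1) b = treeRes k n (n - 1) (Nat.sub_le n 1) a)).card
          = 2 ^ i) ∧
      (A.card : ℝ) / (2 * Real.logb 2 k) ≤ (A'.card : ℝ) := by
  set π : (Fin n → Fin k) → (Fin (n - 1) → Fin k) :=
    treeRes k n (n - 1) (Nat.sub_le n 1) with hπ
  set fib : (Fin (n - 1) → Fin k) → Finset (Fin n → Fin k) :=
    fun p => A.filter (fun b => π b = p) with hfib
  -- membership in fibers
  have hmemfib : ∀ p b, b ∈ fib p ↔ b ∈ A ∧ π b = p := by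
    intro p b; simp [hfib]
  -- the candidate sets
  set B : ℕ → Finset (Fin n → Fin k) :=
    fun i => Finset.univ.biUnion (fun p => subChoose (fib p) (2 ^ i)) with hB
  have hmemB : ∀ i b, b ∈ B i ↔ b ∈ subChoose (fib (π b)) (2 ^ i) := by
    intro i b
    constructor
    · intro hb
      rcases Finset.mem_biUnion.mp hb with ⟨p, _, hbp⟩
      have : b ∈ fib p := subChoose_subset _ _ hbp
      have : π b = p := ((hmemfib p b).mp this).2
      rwa [this]
    · intro hb
      exact Finset.mem_biUnion.mpr ⟨π b, Finset.mem_univ _, hb⟩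
  have hBsub : ∀ i, B i ⊆ A := by
    intro i b hb
    exact ((hmemfib _ b).mp (subChoose_subset _ _ ((hmemB i b).mp hb))).1
  -- the regularity property
  have hreg : ∀ i, ∀ a ∈ B i,
      ((B i).filter (fun b => π b = π a)).card = 2 ^ i := by
    intro i a ha
    have key : (B i).filter (fun b => π b = π a) = subChoose (fib (π a)) (2 ^ i) := by
      ext b
      constructor
      · intro hb
        rcases Finset.mem_filter.mp hb with ⟨hb1, hb2⟩
        have := (hmemB i b).mp hb1
        rwa [hb2] at this
      · intro hb
        have hπb : π b = π a := ((hmemfib _ b).mp (subChoose_subset _ _ hb)).2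
        refine Finset.mem_filter.mpr ⟨(hmemB i b).mpr ?_, hπb⟩
        rwa [hπb]
      
    rw [key]
    have ha' := (hmemB i a).mp ha
    have hne : (subChoose (fib (π a)) (2 ^ i)).Nonempty := ⟨a, ha'⟩
    have h : 2 ^ i ≤ (fib (π a)).card := by
      by_contra h
      have h0 : (subChoose (fib (π a)) (2 ^ i)).card = 0 := by
        rw [subChoose_card, if_neg h]
      exact hne.ne_empty (Finset.card_eq_zero.mp h0)
    rw [subChoose_card, if_pos h]
  -- cardinality of B i
  have hcardB : ∀ i, (B i).card =
      ∑ p : Fin (n - 1) → Fin k, (subChoose (fib p) (2 ^ i)).card := by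
    intro i
    apply Finset.card_biUnion
    intro p _ q _ hpq
    apply Finset.disjoint_left.mpr
    intro b hbp hbq
    have h1 : π b = p := ((hmemfib p b).mp (subChoose_subset _ _ hbp)).2
    have h2 : π b = q := ((hmemfib q b).mp (subChoose_subset _ _ hbq)).2
    exact hpq (h1 ▸ h2)
  -- each fiber has at most k elements
  have hfibcard : ∀ p, (fib p).card ≤ k := by
    intro p
    have hend : n - 1 < n := by omega
    have : (fib p).card ≤ (Finset.univ : Finset (Fin k)).card := by
      apply Finset.card_le_card_of_injOn (fun b => b ⟨n - 1, hend⟩)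
        (fun _ _ => Finset.mem_univ _)
      intro b hb c hc hbc
      have hb' : π b = p := ((hmemfib p b).mp hb).2
      have hc' : π c = p := ((hmemfib p c).mp hc).2
      funext j
      by_cases hj : (j : ℕ) < n - 1
      · have hbj : b j = (π b) ⟨(j : ℕ), hj⟩ := rfl
        have hcj : c j = (π c) ⟨(j : ℕ), hj⟩ := rfl
        rw [hbj, hcj, hb', hc']
      · have h1 : n - 1 ≤ (j : ℕ) := Nat.not_lt.mp hj
        have h2 : (j : ℕ) ≤ n - 1 := Nat.le_pred_of_lt j.isLt
        have hjn : j = ⟨n - 1, hend⟩ := Fin.ext (Nat.le_antisymm h2 h1)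
        rw [hjn]
        exact hbc
    simpa using this
  -- the total count
  set L : ℕ := Nat.log 2 k with hL
  have hsum : A.card ≤ ∑ i ∈ Finset.range (L + 1), (B i).card := by
    have hA : A.card = ∑ p : Fin (n - 1) → Fin k, (fib p).card :=
      Finset.card_eq_sum_card_fiberwise (fun x _ => Finset.mem_univ (π x))
    rw [hA]
    have : ∑ i ∈ Finset.range (L + 1), (B i).card =
        ∑ p : Fin (n - 1) → Fin k, ∑ i ∈ Finset.range (L + 1),
          (subChoose (fib p) (2 ^ i)).card := by
      rw [Finset.sum_comm]
      exact Finset.sum_congr rfl (fun i _ => hcardB i)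
    rw [this]
    apply Finset.sum_le_sum
    intro p _
    have hlt : (fib p).card < 2 ^ (L + 1) :=
      lt_of_le_of_lt (hfibcard p) (Nat.lt_pow_succ_log_self one_lt_two k)
    calc (fib p).card
        ≤ ∑ i ∈ Finset.range (L + 1), if 2 ^ i ≤ (fib p).card then 2 ^ i else 0 :=
          nat_le_sum_pow (L + 1) _ hlt
      _ = ∑ i ∈ Finset.range (L + 1), (subChoose (fib p) (2 ^ i)).card :=
          Finset.sum_congr rfl (fun i _ => (subChoose_card _ _).symm)
  -- choose the best i
  have hbest : ∃ i, A.card ≤ (L + 1) * (B i).card := by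
    have hne : (Finset.range (L + 1)).Nonempty := ⟨0, by simp⟩
    have h1 : ∑ _i ∈ Finset.range (L + 1), A.card ≤
        ∑ i ∈ Finset.range (L + 1), (L + 1) * (B i).card := by
      rw [Finset.sum_const, Finset.card_range, ← Finset.mul_sum]
      exact Nat.mul_le_mul_left _ hsum
    rcases Finset.exists_le_of_sum_le hne h1 with ⟨i, _, hi⟩
    exact ⟨i, hi⟩
  rcases hbest with ⟨i, hi⟩
  refine ⟨i, B i, hBsub i, hreg i, ?_⟩
  -- the real-number bound
  rcases eq_or_lt_of_le (show 1 ≤ k from hk) with hk1 | hk2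
  · -- k = 1 : the bound is trivial since logb 2 1 = 0
    have hk1' : (k : ℝ) = 1 := by exact_mod_cast hk1.symm
    rw [hk1', Real.logb_one, mul_zero, div_zero]
    positivity
  · -- k ≥ 2
    have hk2' : (2 : ℝ) ≤ (k : ℝ) := by exact_mod_cast hk2
    have hlog1 : (1 : ℝ) ≤ Real.logb 2 k := by
      rw [← Real.logb_self_eq_one (by norm_num : (1:ℝ) < 2)]
      exact (Real.logb_le_logb one_lt_two (by norm_num) (by linarith)).mpr hk2'
    have hLlog : (L : ℝ) ≤ Real.logb 2 k := by
      have h2L : (2 : ℝ) ^ L ≤ (k : ℝ) := by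
        exact_mod_cast Nat.pow_log_le_self 2 (by omega)
      calc (L : ℝ) = Real.logb 2 ((2 : ℝ) ^ L) := by
              rw [Real.logb_pow, Real.logb_self_eq_one (by norm_num : (1:ℝ) < 2), mul_one]
        _ ≤ Real.logb 2 k :=
            (Real.logb_le_logb one_lt_two (by positivity) (by linarith)).mpr h2L
    have hden : (L : ℝ) + 1 ≤ 2 * Real.logb 2 k := by linarith
    have hdenpos : (0 : ℝ) < (L : ℝ) + 1 := by positivity
    have hstep1 : (A.card : ℝ) / (2 * Real.logb 2 k) ≤ (A.card : ℝ) / ((L : ℝ) + 1) :=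
      div_le_div_of_nonneg_left (by positivity) hdenpos hden
    have hstep2 : (A.card : ℝ) / ((L : ℝ) + 1) ≤ ((B i).card : ℝ) := by
      rw [div_le_iff₀ hdenpos]
      have : (A.card : ℝ) ≤ ((L + 1 : ℕ) : ℝ) * ((B i).card : ℝ) := by
        exact_mod_cast hi
      push_cast at this
      linarith
    linarith
end

section
/- Let F be a field, G a subgroup of GL_n(F), and A a symmetric subset of G containing the identity that generates a subgroup which is Zariski-dense in G. Then the F-linear span of the n²-fold product set A·A·…·A (n² factors) equals the F-span F[G] of G inside the matrix algebra M_n(F). -/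
open scoped Pointwise MatrixGroups

/-- Let `F` be a field, `G` a subgroup of `GL_n(F)`, and `A` a symmetric subset
of `G` containing the identity whose generated subgroup is Zariski-dense in `G` (every polynomial
in the matrix entries vanishing on `⟨A⟩` vanishes on `G`).  Then the `F`-linear span (inside the
matrix algebra `M_n(F)`) of the `n²`-fold product set `A ⋯ A` equals the `F`-span `F[G]` of `G`. -/
theorem stmt6 {n : ℕ} {F : Type*} [Field F]
    (G : Subgroup (GL (Fin n) F)) (A : Set (GL (Fin n) F))
    (hAG : A ⊆ (G : Set (GL (Fin n) F))) (hA1 : (1 : GL (Fin n) F) ∈ A) (hAsymm : A⁻¹ = A)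
    (hdense : ∀ p : MvPolynomial (Fin n × Fin n) F,
      (∀ a ∈ Subgroup.closure A,
        MvPolynomial.eval (fun ij => ((a : Matrix (Fin n) (Fin n) F)) ij.1 ij.2) p = 0) →
      (∀ g ∈ G,
        MvPolynomial.eval (fun ij => ((g : Matrix (Fin n) (Fin n) F)) ij.1 ij.2) p = 0)) :
    Submodule.span F ((fun g : GL (Fin n) F => (g : Matrix (Fin n) (Fin n) F)) '' (A ^ (n ^ 2)))
      = Submodule.span F
          ((fun g : GL (Fin n) F => (g : Matrix (Fin n) (Fin n) F)) '' (G : Set (GL (Fin n) F))) := by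
  classical
  set f : GL (Fin n) F → Matrix (Fin n) (Fin n) F := fun g => (g : Matrix (Fin n) (Fin n) F)
    with hf
  -- trivial case n = 0
  rcases Nat.eq_zero_or_pos n with hn | hn
  · subst hn
    haveI : Subsingleton (Matrix (Fin 0) (Fin 0) F) :=
      ⟨fun a b => by ext i; exact absurd i.2 (by omega)⟩
    exact Subsingleton.elim _ _
  set V : ℕ → Submodule F (Matrix (Fin n) (Fin n) F) :=
    fun m => Submodule.span F (f '' (A ^ m)) with hV
  -- monotonicity
  have hpow : ∀ m, A ^ m ⊆ A ^ (m + 1) := by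
    intro m x hx
    rw [pow_succ']
    exact ⟨1, hA1, x, hx, one_mul x⟩
  have hVmono : Monotone V := by
    apply monotone_nat_of_le_succ
    intro m
    exact Submodule.span_mono (Set.image_mono (hpow m))
  have hVmono' : ∀ {a b : ℕ}, a ≤ b → V a ≤ V b := fun h => hVmono h
  -- step: once stabilized, stabilized forever
  have hstep : ∀ m, V m = V (m + 1) → V (m + 1) = V (m + 2) := by
    intro m h
    refine le_antisymm (hVmono' (by omega)) ?_
    rw [hV]
    rw [Submodule.span_le]
    rintro _ ⟨x, hx, rfl⟩
    rw [show m + 2 = (m + 1) + 1 from rfl, pow_succ] at hx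
    obtain ⟨b, hb, a, ha, rfl⟩ := hx
    have hfb : f b ∈ V m := by
      rw [h]
      exact Submodule.subset_span ⟨b, hb, rfl⟩
    have : f (b * a) = (LinearMap.mulRight F (f a)) (f b) := by
      simp [hf, LinearMap.mulRight_apply, Units.val_mul]
    rw [this]
    have hmap : (V m).map (LinearMap.mulRight F (f a)) ≤ V (m + 1) := by
      rw [hV, Submodule.map_span, Submodule.span_le]
      rintro _ ⟨_, ⟨c, hc, rfl⟩, rfl⟩
      refine Submodule.subset_span ⟨c * a, ?_, ?_⟩
      · rw [pow_succ]; exact Set.mul_mem_mul hc ha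
      · simp [hf, LinearMap.mulRight_apply, Units.val_mul]
    exact hmap ⟨f b, hfb, rfl⟩
  have hstable : ∀ m k, V m = V (m + 1) → V (m + k) = V m := by
    intro m k h
    induction k with
    | zero => rfl
    | succ k ih =>
      have h2 : ∀ j, V (m + j) = V (m + j + 1) := by
        intro j
        induction j with
        | zero => exact h
        | succ j ihj => exact hstep (m + j) ihj
      rw [show m + (k + 1) = m + k + 1 from rfl, ← h2 k, ih]
  -- there is k ≤ n^2 - 1 with V k = V (k+1); indeed find stabilization point ≤ n^2
  have hfinrank : Module.finrank F (Matrix (Fin n) (Fin n) F) = n ^ 2 := by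
    simp [Module.finrank_matrix, sq]
  have hexists : ∃ k < n ^ 2, V k = V (k + 1) := by
    by_contra hcon
    push_neg at hcon
    have hlt : ∀ k < n ^ 2, V k < V (k + 1) := fun k hk =>
      lt_of_le_of_ne (hVmono' (by omega)) (hcon k hk)
    have hdim : ∀ k ≤ n ^ 2, k + 1 ≤ Module.finrank F (V k) := by
      intro k hk
      induction k with
      | zero =>
        have h1 : (1 : Matrix (Fin n) (Fin n) F) ∈ V 0 := by
          refine Submodule.subset_span ⟨(1 : GL (Fin n) F), ?_, ?_⟩
          · rw [pow_zero]; exact Set.mem_one.mpr rfl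
          · simp [hf]
        have hone : (1 : Matrix (Fin n) (Fin n) F) ≠ 0 := by
          intro h
          have := congrFun (congrFun h ⟨0, hn⟩) ⟨0, hn⟩
          simp at this
        have hne : V 0 ≠ ⊥ := by
          intro hbot
          rw [hbot, Submodule.mem_bot] at h1
          exact hone h1
        have := Submodule.one_le_finrank_iff.mpr hne
        omega
      | succ k ih =>
        have h1 : k + 1 ≤ Module.finrank F (V k) := ih (by omega)
        have h2 : Module.finrank F (V k) < Module.finrank F (V (k + 1)) :=
          Submodule.finrank_lt_finrank_of_lt (hlt k (by omega))
        omega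
    have := hdim (n ^ 2) le_rfl
    have hle := Submodule.finrank_le (V (n ^ 2))
    rw [hfinrank] at hle
    omega
  obtain ⟨k, hk, hkst⟩ := hexists
  -- V is constantly V (n^2) from k on; in particular for all m, V m ≤ V (n^2)
  have hVle : ∀ m, V m ≤ V (n ^ 2) := by
    intro m
    rcases le_or_gt m (n ^ 2) with h | h
    · exact hVmono' h
    · have h1 : V m = V k := by
        have := hstable k (m - k) hkst
        rwa [Nat.add_sub_cancel' (by omega)] at this
      have h2 : V (n ^ 2) = V k := by
        have := hstable k (n ^ 2 - k) hkst
        rwa [Nat.add_sub_cancel' (by omega)] at this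
      rw [h1, h2]
  -- span of closure A equals V (n^2)
  have hclos : ∀ a ∈ Subgroup.closure A, f a ∈ V (n ^ 2) := by
    intro a ha
    have key : ∃ m, a ∈ A ^ m := by
      refine Subgroup.closure_induction (fun x hx => ⟨1, by simpa [pow_one] using hx⟩)
        ⟨0, by simp [pow_zero]⟩ ?_ ?_ ha
      · rintro x y _ _ ⟨m1, hm1⟩ ⟨m2, hm2⟩
        exact ⟨m1 + m2, by rw [pow_add]; exact Set.mul_mem_mul hm1 hm2⟩
      · rintro x _ ⟨m, hm⟩
        refine ⟨m, ?_⟩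
        have : x⁻¹ ∈ (A ^ m)⁻¹ := Set.inv_mem_inv.mpr hm
        rwa [← inv_pow, hAsymm] at this
    obtain ⟨m, hm⟩ := key
    exact hVle m (Submodule.subset_span ⟨a, hm, rfl⟩)
  -- closure A ⊆ G
  have hclosG : Subgroup.closure A ≤ G := (Subgroup.closure_le G).mpr hAG
  -- forward inclusion: V (n^2) ≤ span f '' G
  refine le_antisymm ?_ ?_
  · rw [Submodule.span_le]
    rintro _ ⟨x, hx, rfl⟩
    have hxA : x ∈ Subgroup.closure A := by
      have hsub : ∀ m, A ^ m ⊆ (Subgroup.closure A : Set (GL (Fin n) F)) := by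
        intro m
        induction m with
        | zero => simp [pow_zero, Set.singleton_subset_iff, Subgroup.one_mem]
        | succ m ih =>
          rw [pow_succ]
          rintro _ ⟨b, hb, c, hc, rfl⟩
          exact mul_mem (ih hb) (Subgroup.subset_closure hc)
      exact hsub (n ^ 2) hx
    exact Submodule.subset_span ⟨x, hclosG hxA, rfl⟩
  -- reverse inclusion via Zariski density
  · rw [Submodule.span_le]
    rintro _ ⟨g, hg, rfl⟩
    by_contra hgn
    obtain ⟨φ, hφg, hφker⟩ :=
      Submodule.exists_dual_map_eq_bot_of_notMem (p := V (n ^ 2)) hgn inferInstance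
    have hφ0 : ∀ x ∈ V (n ^ 2), φ x = 0 := by
      intro x hx
      have : φ x ∈ (V (n ^ 2)).map φ := ⟨x, hx, rfl⟩
      rwa [hφker, Submodule.mem_bot] at this
    -- φ as a linear polynomial
    set p : MvPolynomial (Fin n × Fin n) F :=
      ∑ ij : Fin n × Fin n,
        MvPolynomial.C (φ (Matrix.single ij.1 ij.2 1)) * MvPolynomial.X ij with hp
    have hpeval : ∀ M : Matrix (Fin n) (Fin n) F,
        MvPolynomial.eval (fun ij => M ij.1 ij.2) p = φ M := by
      intro M
      rw [hp]
      have hM : M = ∑ i : Fin n, ∑ j : Fin n, Matrix.single i j (M i j) :=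
        Matrix.matrix_eq_sum_single M
      conv_rhs => rw [hM]
      rw [map_sum]
      simp only [map_sum]
      rw [← Fintype.sum_prod_type']
      refine Finset.sum_congr rfl fun ij _ => ?_
      have : Matrix.single ij.1 ij.2 (M ij.1 ij.2)
          = (M ij.1 ij.2) • Matrix.single ij.1 ij.2 1 := by
        rw [Matrix.smul_single, smul_eq_mul, mul_one]
      rw [this, map_smul, smul_eq_mul]
      simp [mul_comm]
    have hvanish : ∀ a ∈ Subgroup.closure A,
        MvPolynomial.eval (fun ij => (f a) ij.1 ij.2) p = 0 := by
      intro a ha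
      rw [hpeval]
      exact hφ0 _ (hclos a ha)
    have := hdense p hvanish g hg
    rw [hpeval] at this
    exact hφg this
end

section
/- Let p be a prime, m, k, N positive integers with k ≥ m. Work in a matrix group over Z_p. If tⱼ ≡ 1 + p^m yⱼ (mod p^{2m}) for 1 ≤ j ≤ N and γ₀ ≡ 1 + p^k ξ₀ (mod p^{2k}), then the iterated commutator C_{t₁} ∘ ⋯ ∘ C_{t_N}(γ₀) ≡ 1 + p^{k+Nm} ad(y₁)ad(y₂)⋯ad(y_N)(ξ₀) (mod p^{k+(N+1)m}), where C_t(γ) := tγt⁻¹γ⁻¹ and ad(y)(ξ) := yξ − ξy. -/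
open Finset

/-- Entrywise congruence of matrices over `ℤ_p` modulo `p^r`. -/
def MatMod {d : ℕ} (p : ℕ) [Fact p.Prime] (r : ℕ)
    (A B : Matrix (Fin d) (Fin d) ℤ_[p]) : Prop :=
  ∃ C : Matrix (Fin d) (Fin d) ℤ_[p], A - B = ((p : ℤ_[p]) ^ r) • C

/-- The commutator map `C_t(γ) = t γ t⁻¹ γ⁻¹`. -/
noncomputable def commMap {d : ℕ} {p : ℕ} [Fact p.Prime]
    (t γ : (Matrix (Fin d) (Fin d) ℤ_[p])ˣ) : (Matrix (Fin d) (Fin d) ℤ_[p])ˣ :=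
  t * γ * t⁻¹ * γ⁻¹

/-- `ad(y)(ξ) = yξ − ξy`. -/
noncomputable def adMat {d : ℕ} {p : ℕ} [Fact p.Prime]
    (y ξ : Matrix (Fin d) (Fin d) ℤ_[p]) : Matrix (Fin d) (Fin d) ℤ_[p] :=
  y * ξ - ξ * y

section Aux

variable {d : ℕ} {p : ℕ} [Fact p.Prime]

local notation "Mat" => Matrix (Fin d) (Fin d) ℤ_[p]

lemma matMod_weaken {r s : ℕ} (hsr : s ≤ r) {A B : Mat} (h : MatMod p r A B) :
    MatMod p s A B := by
  obtain ⟨C, hC⟩ := h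
  refine ⟨((p : ℤ_[p]) ^ (r - s)) • C, ?_⟩
  rw [hC, smul_smul, ← pow_add]
  congr 2
  omega

lemma unit_inv_mod (r : ℕ) (u : Matˣ) (x : Mat)
    (h : (u : Mat) = 1 + ((p : ℤ_[p]) ^ r) • x) :
    ∃ x' : Mat, ((u⁻¹ : Matˣ) : Mat) = 1 + ((p : ℤ_[p]) ^ r) • x' := by
  refine ⟨-(((u⁻¹ : Matˣ) : Mat) * x), ?_⟩
  have h1 : ((u⁻¹ : Matˣ) : Mat) * (u : Mat) = 1 := u.inv_mul
  rw [h, mul_add, mul_one, mul_smul_comm] at h1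
  rw [smul_neg, ← sub_eq_add_neg]
  exact eq_sub_of_add_eq h1

lemma step_lemma (m K : ℕ) (hK : m ≤ K) (t γ : Matˣ) (y ξ : Mat)
    (ht : MatMod p (2 * m) (t : Mat) (1 + ((p : ℤ_[p]) ^ m) • y))
    (hγ : MatMod p (K + m) (γ : Mat) (1 + ((p : ℤ_[p]) ^ K) • ξ)) :
    MatMod p (K + 2 * m) ((commMap t γ : Matˣ) : Mat)
      (1 + ((p : ℤ_[p]) ^ (K + m)) • adMat y ξ) := by
  obtain ⟨K', rfl⟩ : ∃ K', K = m + K' := ⟨K - m, by omega⟩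
  set π : ℤ_[p] := (p : ℤ_[p]) with hπ
  obtain ⟨a, ha⟩ := ht
  obtain ⟨b, hb⟩ := hγ
  have hT : (t : Mat) = 1 + π ^ m • y + π ^ (2 * m) • a := by
    have := eq_add_of_sub_eq ha
    rw [this]; abel
  have hG : (γ : Mat) = 1 + π ^ (m + K') • ξ + π ^ (m + K' + m) • b := by
    have := eq_add_of_sub_eq hb
    rw [this]; abel
  have hTm : (t : Mat) = 1 + π ^ m • (y + π ^ m • a) := by
    rw [hT]; module
  have hGm : (γ : Mat) = 1 + π ^ m • (π ^ K' • ξ + π ^ (K' + m) • b) := by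
    rw [hG]; module
  obtain ⟨a', hTi⟩ := unit_inv_mod m t _ hTm
  obtain ⟨b', hGi⟩ := unit_inv_mod m γ _ hGm
  have h1 : (t : Mat) * ((t⁻¹ : Matˣ) : Mat) = 1 := t.mul_inv
  have h2 : (γ : Mat) * ((γ⁻¹ : Matˣ) : Mat) = 1 := γ.mul_inv
  have hassoc : (γ : Mat) * (t : Mat) *
      (((t⁻¹ : Matˣ) : Mat) * ((γ⁻¹ : Matˣ) : Mat)) = 1 := by
    calc (γ : Mat) * (t : Mat) * (((t⁻¹ : Matˣ) : Mat) * ((γ⁻¹ : Matˣ) : Mat))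
        = (γ : Mat) * (((t : Mat) * ((t⁻¹ : Matˣ) : Mat)) * ((γ⁻¹ : Matˣ) : Mat)) := by
          noncomm_ring
      _ = 1 := by rw [h1, one_mul, h2]
  have hC : ((commMap t γ : Matˣ) : Mat) =
      1 + ((t : Mat) * (γ : Mat) - (γ : Mat) * (t : Mat)) *
        (((t⁻¹ : Matˣ) : Mat) * ((γ⁻¹ : Matˣ) : Mat)) := by
    simp only [commMap, Units.val_mul]
    rw [sub_mul, hassoc]
    noncomm_ring
  -- abbreviations
  set E : Mat := y * b - b * y + a * ξ - ξ * a + π ^ m • (a * b - b * a) with hE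
  set W : Mat := a' + b' + π ^ m • (a' * b') with hW
  have hcomm : (t : Mat) * (γ : Mat) - (γ : Mat) * (t : Mat)
      = π ^ (m + K' + m) • (adMat y ξ + π ^ m • E) := by
    rw [hT, hG, hE, adMat]
    simp only [mul_add, add_mul, mul_one, one_mul, smul_mul_assoc, mul_smul_comm]
    module
  have hTiGi : ((t⁻¹ : Matˣ) : Mat) * ((γ⁻¹ : Matˣ) : Mat) = 1 + π ^ m • W := by
    rw [hTi, hGi, hW]
    simp only [mul_add, add_mul, mul_one, one_mul, smul_mul_assoc, mul_smul_comm]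
    module
  refine ⟨E + (adMat y ξ + π ^ m • E) * W, ?_⟩
  rw [hC, hcomm, hTiGi]
  simp only [mul_add, add_mul, mul_one, one_mul, smul_mul_assoc, mul_smul_comm, smul_add]
  module

lemma aux_lemma (m : ℕ) (N : ℕ) : ∀ (K : ℕ), m ≤ K →
    ∀ (t : Fin N → Matˣ) (y : Fin N → Mat) (γ : Matˣ) (ξ : Mat),
    (∀ j, MatMod p (2 * m) (t j : Mat) (1 + ((p : ℤ_[p]) ^ m) • y j)) →
    MatMod p (K + m) (γ : Mat) (1 + ((p : ℤ_[p]) ^ K) • ξ) →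
    MatMod p (K + N * m + m) (((List.ofFn t).foldr commMap γ : Matˣ) : Mat)
      (1 + ((p : ℤ_[p]) ^ (K + N * m)) • ((List.ofFn y).foldr adMat ξ)) := by
  induction N with
  | zero =>
    intro K hK t y γ ξ ht hγ
    simpa using hγ
  | succ N ih =>
    intro K hK t y γ ξ ht hγ
    rw [List.ofFn_succ, List.foldr_cons, List.ofFn_succ (f := y), List.foldr_cons]
    have inner := ih K hK (fun i => t i.succ) (fun i => y i.succ) γ ξ
      (fun i => ht i.succ) hγ
    have hstep := step_lemma m (K + N * m) (by omega) (t 0)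
      ((List.ofFn fun i => t i.succ).foldr commMap γ) (y 0)
      ((List.ofFn fun i => y i.succ).foldr adMat ξ) (ht 0) inner
    have e1 : K + (N + 1) * m + m = K + N * m + 2 * m := by ring
    have e2 : K + (N + 1) * m = K + N * m + m := by ring
    rw [e1, e2]
    exact hstep

end Aux

/-- Let `p` be a prime, `m, k, N` positive integers with `k ≥ m`.  If
`tⱼ ≡ 1 + p^m yⱼ (mod p^{2m})` for `1 ≤ j ≤ N` and `γ₀ ≡ 1 + p^k ξ₀ (mod p^{2k})` in
`GL_d(ℤ_p)`, then
`C_{t₁} ∘ ⋯ ∘ C_{t_N}(γ₀) ≡ 1 + p^{k+Nm} ad(y₁)⋯ad(y_N)(ξ₀) (mod p^{k+(N+1)m})`,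
where `C_t(γ) = tγt⁻¹γ⁻¹` and `ad(y)(ξ) = yξ − ξy`. -/
theorem stmt8 {d : ℕ} (p : ℕ) [Fact p.Prime] (m k N : ℕ)
    (hm : 0 < m) (hk : 0 < k) (hN : 0 < N) (hkm : m ≤ k)
    (t : Fin N → (Matrix (Fin d) (Fin d) ℤ_[p])ˣ)
    (y : Fin N → Matrix (Fin d) (Fin d) ℤ_[p])
    (γ₀ : (Matrix (Fin d) (Fin d) ℤ_[p])ˣ)
    (ξ₀ : Matrix (Fin d) (Fin d) ℤ_[p])
    (ht : ∀ j, MatMod p (2 * m) (t j : Matrix (Fin d) (Fin d) ℤ_[p])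
      (1 + ((p : ℤ_[p]) ^ m) • y j))
    (hγ : MatMod p (2 * k) (γ₀ : Matrix (Fin d) (Fin d) ℤ_[p])
      (1 + ((p : ℤ_[p]) ^ k) • ξ₀)) :
    MatMod p (k + (N + 1) * m)
      (((List.ofFn t).foldr commMap γ₀ : (Matrix (Fin d) (Fin d) ℤ_[p])ˣ) :
        Matrix (Fin d) (Fin d) ℤ_[p])
      (1 + ((p : ℤ_[p]) ^ (k + N * m)) • ((List.ofFn y).foldr adMat ξ₀)) := by
  have hγ' : MatMod p (k + m) (γ₀ : Matrix (Fin d) (Fin d) ℤ_[p])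
      (1 + ((p : ℤ_[p]) ^ k) • ξ₀) := matMod_weaken (by omega) hγ
  have h := aux_lemma m N k hkm t y γ₀ ξ₀ ht hγ'
  have e : k + N * m + m = k + (N + 1) * m := by ring
  rw [e] at h
  exact h
end

section
/- Let g, g' be elements of a matrix group over Z_p (or a product of Z_p's) with g ≡ 1 (mod q₁) and g' ≡ 1 (mod q₁'). Then the commutator (g, g') = g⁻¹g'⁻¹gg' satisfies (g, g') ≡ 1 (mod q₁q₁'). Moreover, writing g = 1 + q₁x + O(q₁²) and g' = 1 + q₁'x' + O(q₁'²), one has (g, g') ≡ 1 + q₁q₁'[x, x'] modulo q := gcd(q₂q₁', q₁q₂') whenever q₁ | q₂ | q₁² and q₁' | q₂' | q₁'². -/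
/-- Entrywise congruence of matrices over `ℤ_p` modulo a natural number `q`. -/
def MatModN {d : ℕ} {p : ℕ} [Fact p.Prime] (q : ℕ)
    (A B : Matrix (Fin d) (Fin d) ℤ_[p]) : Prop :=
  ∃ C : Matrix (Fin d) (Fin d) ℤ_[p], A - B = (q : ℤ_[p]) • C

private lemma core9 {R : Type*} [Ring R] (q₁ q₁' : ℕ) (G G' Gi G'i x x' A A' E E' : R)
    (k1 : Gi * G = 1) (k1' : G'i * G' = 1)
    (hA : G = q₁ • A + 1) (hA' : G' = q₁' • A' + 1)
    (hE : G = q₁ ^ 2 • E + (1 + q₁ • x)) (hE' : G' = q₁' ^ 2 • E' + (1 + q₁' • x')) :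
    Gi * G'i * G * G' - 1 = (q₁ * q₁') • (Gi * G'i * (A * A' - A' * A)) ∧
    Gi * G'i * G * G' - (1 + (q₁ * q₁') • (x * x' - x' * x)) =
      (q₁ ^ 2 * q₁') • (Gi * G'i * (E * x' - x' * E - A * (x * x' - x' * x)))
      + (q₁ * q₁' ^ 2) • (Gi * G'i * (x * E' - E' * x - A' * (x * x' - x' * x)))
      + (q₁ ^ 2 * q₁' ^ 2) • (Gi * G'i * (E * E' - E' * E - A' * (A * (x * x' - x' * x)))) := by
  have lemA : Gi * G'i * G * G' - 1 = Gi * G'i * (G * G' - G' * G) := by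
    have h : Gi * G'i * (G * G' - G' * G) = Gi * G'i * G * G' - Gi * (G'i * G') * G := by
      noncomm_ring
    rw [h, k1', mul_one, k1]
  have lemB : ∀ Z : R, Gi * G'i * (G' * (G * Z)) = Z := by
    intro Z
    rw [show Gi * G'i * (G' * (G * Z)) = Gi * ((G'i * G') * (G * Z)) by noncomm_ring,
      k1', one_mul, ← mul_assoc, k1, one_mul]
  set c₀ : R := x * x' - x' * x with hc₀
  constructor
  · have hGG' : G * G' - G' * G = (q₁ * q₁') • (A * A' - A' * A) := by
      rw [hA, hA']; noncomm_ring; module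
    rw [lemA, hGG', mul_smul_comm]
  · have hT1eq : G * G' - G' * G - (q₁ * q₁') • c₀
        = (q₁ ^ 2 * q₁') • (E * x' - x' * E) + (q₁ * q₁' ^ 2) • (x * E' - E' * x)
          + (q₁ ^ 2 * q₁' ^ 2) • (E * E' - E' * E) := by
      rw [hc₀, hE, hE']; noncomm_ring; module
    have hT2eq : (G' * G - 1) * ((q₁ * q₁') • c₀)
        = (q₁ ^ 2 * q₁') • (A * c₀) + (q₁ * q₁' ^ 2) • (A' * c₀)
          + (q₁ ^ 2 * q₁' ^ 2) • (A' * (A * c₀)) := by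
      rw [hA, hA']; noncomm_ring; module
    have hT : G * G' - G' * G - (q₁ * q₁') • c₀ - (G' * G - 1) * ((q₁ * q₁') • c₀)
        = (q₁ ^ 2 * q₁') • (E * x' - x' * E - A * c₀)
          + (q₁ * q₁' ^ 2) • (x * E' - E' * x - A' * c₀)
          + (q₁ ^ 2 * q₁' ^ 2) • (E * E' - E' * E - A' * (A * c₀)) := by
      rw [hT1eq, hT2eq]; module
    calc Gi * G'i * G * G' - (1 + (q₁ * q₁') • c₀)
        = (Gi * G'i * G * G' - 1) - (q₁ * q₁') • c₀ := by abel
      _ = Gi * G'i * (G * G' - G' * G) - Gi * G'i * (G' * (G * ((q₁ * q₁') • c₀))) := by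
          rw [lemA, lemB ((q₁ * q₁') • c₀)]
      _ = Gi * G'i * (G * G' - G' * G - (q₁ * q₁') • c₀ - (G' * G - 1) * ((q₁ * q₁') • c₀)) := by
          set s : R := (q₁ * q₁') • c₀; noncomm_ring
      _ = _ := by rw [hT]; simp only [mul_add, mul_smul_comm]


/-- Let `g, g'` be elements of a matrix group over `ℤ_p` with `g ≡ 1 (mod q₁)`
and `g' ≡ 1 (mod q₁')`.  Then the commutator `(g,g') = g⁻¹g'⁻¹gg'` satisfies
`(g,g') ≡ 1 (mod q₁q₁')`.  Moreover, writing `g = 1 + q₁ x + O(q₁²)` and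
`g' = 1 + q₁' x' + O(q₁'²)`, one has `(g,g') ≡ 1 + q₁q₁'[x,x']` modulo
`q := gcd(q₂q₁', q₁q₂')`, whenever `q₁ ∣ q₂ ∣ q₁²` and `q₁' ∣ q₂' ∣ q₁'²`. -/
theorem stmt9 {d : ℕ} {p : ℕ} [Fact p.Prime]
    (q₁ q₂ q₁' q₂' : ℕ)
    (h₁ : q₁ ∣ q₂) (h₂ : q₂ ∣ q₁ ^ 2) (h₁' : q₁' ∣ q₂') (h₂' : q₂' ∣ q₁' ^ 2)
    (g g' : (Matrix (Fin d) (Fin d) ℤ_[p])ˣ)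
    (x x' : Matrix (Fin d) (Fin d) ℤ_[p])
    (hg1 : MatModN q₁ (g : Matrix (Fin d) (Fin d) ℤ_[p]) 1)
    (hg'1 : MatModN q₁' (g' : Matrix (Fin d) (Fin d) ℤ_[p]) 1)
    (hgx : MatModN (q₁ ^ 2) (g : Matrix (Fin d) (Fin d) ℤ_[p]) (1 + (q₁ : ℤ_[p]) • x))
    (hg'x : MatModN (q₁' ^ 2) (g' : Matrix (Fin d) (Fin d) ℤ_[p]) (1 + (q₁' : ℤ_[p]) • x')) :
    MatModN (q₁ * q₁')
      ((g⁻¹ * g'⁻¹ * g * g' : (Matrix (Fin d) (Fin d) ℤ_[p])ˣ) : Matrix (Fin d) (Fin d) ℤ_[p]) 1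
    ∧
    MatModN (Nat.gcd (q₂ * q₁') (q₁ * q₂'))
      ((g⁻¹ * g'⁻¹ * g * g' : (Matrix (Fin d) (Fin d) ℤ_[p])ˣ) : Matrix (Fin d) (Fin d) ℤ_[p])
      (1 + ((q₁ * q₁' : ℕ) : ℤ_[p]) • (x * x' - x' * x)) := by
  obtain ⟨A, hA⟩ := hg1
  obtain ⟨A', hA'⟩ := hg'1
  obtain ⟨E, hE⟩ := hgx
  obtain ⟨E', hE'⟩ := hg'x
  rw [Nat.cast_smul_eq_nsmul, sub_eq_iff_eq_add] at hA hA' hE hE'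
  rw [Nat.cast_smul_eq_nsmul] at hE hE'
  have hval : ((g⁻¹ * g'⁻¹ * g * g' : (Matrix (Fin d) (Fin d) ℤ_[p])ˣ)
      : Matrix (Fin d) (Fin d) ℤ_[p])
      = ((g⁻¹ : (Matrix (Fin d) (Fin d) ℤ_[p])ˣ) : Matrix (Fin d) (Fin d) ℤ_[p])
        * ((g'⁻¹ : (Matrix (Fin d) (Fin d) ℤ_[p])ˣ) : Matrix (Fin d) (Fin d) ℤ_[p])
        * (g : Matrix (Fin d) (Fin d) ℤ_[p]) * (g' : Matrix (Fin d) (Fin d) ℤ_[p]) := by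
    simp only [Units.val_mul]
  obtain ⟨c1, c2⟩ := core9 q₁ q₁' (g : Matrix (Fin d) (Fin d) ℤ_[p])
    (g' : Matrix (Fin d) (Fin d) ℤ_[p])
    ((g⁻¹ : (Matrix (Fin d) (Fin d) ℤ_[p])ˣ) : Matrix (Fin d) (Fin d) ℤ_[p])
    ((g'⁻¹ : (Matrix (Fin d) (Fin d) ℤ_[p])ˣ) : Matrix (Fin d) (Fin d) ℤ_[p])
    x x' A A' E E' g.inv_mul g'.inv_mul hA hA' hE hE'
  constructor
  · exact ⟨_, by rw [Nat.cast_smul_eq_nsmul, hval, c1]⟩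
  · obtain ⟨u, hu⟩ : Nat.gcd (q₂ * q₁') (q₁ * q₂') ∣ q₁ ^ 2 * q₁' :=
      (Nat.gcd_dvd_left _ _).trans (Nat.mul_dvd_mul_right h₂ q₁')
    obtain ⟨v, hv⟩ : Nat.gcd (q₂ * q₁') (q₁ * q₂') ∣ q₁ * q₁' ^ 2 :=
      (Nat.gcd_dvd_right _ _).trans (Nat.mul_dvd_mul_left q₁ h₂')
    obtain ⟨w, hw⟩ : Nat.gcd (q₂ * q₁') (q₁ * q₂') ∣ q₁ ^ 2 * q₁' ^ 2 :=
      (Nat.gcd_dvd_left _ _).trans (Nat.mul_dvd_mul h₂ (dvd_pow_self q₁' two_ne_zero))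
    refine ⟨u • (((g⁻¹ : (Matrix (Fin d) (Fin d) ℤ_[p])ˣ) : Matrix (Fin d) (Fin d) ℤ_[p])
        * ((g'⁻¹ : (Matrix (Fin d) (Fin d) ℤ_[p])ˣ) : Matrix (Fin d) (Fin d) ℤ_[p])
        * (E * x' - x' * E - A * (x * x' - x' * x)))
      + v • (((g⁻¹ : (Matrix (Fin d) (Fin d) ℤ_[p])ˣ) : Matrix (Fin d) (Fin d) ℤ_[p])
        * ((g'⁻¹ : (Matrix (Fin d) (Fin d) ℤ_[p])ˣ) : Matrix (Fin d) (Fin d) ℤ_[p])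
        * (x * E' - E' * x - A' * (x * x' - x' * x)))
      + w • (((g⁻¹ : (Matrix (Fin d) (Fin d) ℤ_[p])ˣ) : Matrix (Fin d) (Fin d) ℤ_[p])
        * ((g'⁻¹ : (Matrix (Fin d) (Fin d) ℤ_[p])ˣ) : Matrix (Fin d) (Fin d) ℤ_[p])
        * (E * E' - E' * E - A' * (A * (x * x' - x' * x)))), ?_⟩
    rw [Nat.cast_smul_eq_nsmul, Nat.cast_smul_eq_nsmul, hval, c2, hu, hv, hw]
    module
end

section
/- Let H be a finite group with a symmetric generating set Ω, and A ⊆ H symmetric with |∏₃ A| ≤ K|A| for the triple product set. For any x ∈ H and any subset X ⊆ H, one has |A X a A| ≥ |A| · |conj-classes met by Xa| · (average over represented conjugacy classes of 1/|C_H(x) ∩ A·A|), where C_H(x) is the centralizer. Consequently, there exists x₀ ∈ X such that |C_H(x₀a) ∩ A·A| ≥ (|A| / |∏_m A|) · |{conjugacy classes of H meeting Xa}| for appropriate bounded m. -/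
open Finset
open scoped Pointwise

/-- **Helfgott's trick for large centralizers.**  Let `H` be a finite group with a
symmetric generating set `Ω`, and `A ⊆ H` symmetric with `|A·A·A| ≤ K|A|`.  For any `a ∈ H` and
nonempty `X ⊆ H` there exists `x₀ ∈ X` with
`|C_H(x₀a) ∩ A·A| · |A X a A| ≥ |A| · |{conjugacy classes of H meeting Xa}|`;
i.e. `|C_H(x₀a) ∩ A·A| ≥ (|A| / |AXaA|) · |conj(Xa)|`. -/
theorem stmt12 {H : Type*} [Group H] [Fintype H] [DecidableEq H]
    (Ω : Finset H) (hΩsymm : Ω⁻¹ = Ω) (hΩgen : Subgroup.closure (Ω : Set H) = ⊤)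
    (A : Finset H) (hAsymm : A⁻¹ = A) (K : ℝ)
    (htriple : ((A * A * A).card : ℝ) ≤ K * (A.card : ℝ))
    (X : Finset H) (hX : X.Nonempty) (a : H) :
    ∃ x₀ ∈ X,
      A.card * ((X * {a}).image (ConjClasses.mk (α := H))).card ≤
        (A * X * {a} * A).card *
          ((A * A).filter (fun h => h * (x₀ * a) = (x₀ * a) * h)).card := by
  classical
  obtain ⟨x₀, hx₀X, hmax⟩ := X.exists_max_image
    (fun x => ((A * A).filter (fun h => h * (x * a) = (x * a) * h)).card) hX
  refine ⟨x₀, hx₀X, ?_⟩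
  set M := ((A * A).filter (fun h => h * (x₀ * a) = (x₀ * a) * h)).card with hM
  set C := (X * {a}).image (ConjClasses.mk (α := H)) with hC
  have hAinv : ∀ b ∈ A, b⁻¹ ∈ A := by
    intro b hb
    rw [← hAsymm]; exact inv_mem_inv hb
  -- representatives
  have hrep : ∀ c ∈ C, ∃ x ∈ X, ConjClasses.mk (x * a) = c := by
    intro c hc
    rw [hC, mem_image] at hc
    obtain ⟨y, hy, rfl⟩ := hc
    rw [mem_mul] at hy
    obtain ⟨x, hx, b, hb, rfl⟩ := hy
    rw [mem_singleton] at hb; subst hb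
    exact ⟨x, hx, rfl⟩
  choose! f hfX hf using hrep
  set orb : H → Finset H := fun y => A.image (fun α => α * y * α⁻¹) with horb
  -- orbit-centralizer inequality
  have hkey : ∀ y : H,
      A.card ≤ (orb y).card * ((A * A).filter (fun h => h * y = y * h)).card := by
    intro y
    have := Finset.card_le_mul_card_image (f := fun α => α * y * α⁻¹) A
      (((A * A).filter (fun h => h * y = y * h)).card) ?_
    · linarith [this]
    · intro b hb
      rw [mem_image] at hb
      obtain ⟨β, hβA, hβ⟩ := hb
      apply Finset.card_le_card_of_injOn (fun α => β⁻¹ * α)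
      · intro α hα
        rw [mem_coe, mem_filter] at hα
        obtain ⟨hαA, hαb⟩ := hα
        rw [mem_coe, mem_filter]
        constructor
        · exact mul_mem_mul (hAinv β hβA) hαA
        · have h1 : α * y * α⁻¹ = β * y * β⁻¹ := by rw [show α * y * α⁻¹ = b from hαb, hβ]
          have : β⁻¹ * α * y = y * (β⁻¹ * α) := by
            have := congrArg (fun z => β⁻¹ * z * α) h1
            simp only [mul_assoc] at this ⊢
            simpa [mul_assoc] using this
          exact this
      · intro u _ v _ huv
        exact mul_left_cancel huv
  -- orbit elements lie in class
  have horbmk : ∀ y z, z ∈ orb y → ConjClasses.mk z = ConjClasses.mk y := by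
    intro y z hz
    rw [horb] at hz
    simp only [mem_image] at hz
    obtain ⟨α, _, rfl⟩ := hz
    exact (ConjClasses.mk_eq_mk_iff_isConj.mpr (isConj_iff.mpr ⟨α, rfl⟩)).symm
  -- orbits are subsets of A X a A
  have hsub : ∀ c ∈ C, orb (f c * a) ⊆ A * X * {a} * A := by
    intro c hc z hz
    rw [horb] at hz
    simp only [mem_image] at hz
    obtain ⟨α, hα, rfl⟩ := hz
    have : α * (f c * a) * α⁻¹ = α * f c * a * α⁻¹ := by group
    rw [this]
    exact mul_mem_mul (mul_mem_mul (mul_mem_mul hα (hfX c hc)) (mem_singleton_self a))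
      (hAinv α hα)
  -- disjointness
  have hdisj : ∀ c ∈ C, ∀ c' ∈ C, c ≠ c' →
      Disjoint (orb (f c * a)) (orb (f c' * a)) := by
    intro c hc c' hc' hne
    rw [Finset.disjoint_left]
    intro z hz hz'
    apply hne
    rw [← hf c hc, ← hf c' hc', ← horbmk _ _ hz, ← horbmk _ _ hz']
  calc A.card * C.card = ∑ _c ∈ C, A.card := by rw [sum_const, smul_eq_mul, mul_comm]
    _ ≤ ∑ c ∈ C, (orb (f c * a)).card * M := by
        apply sum_le_sum
        intro c hc
        calc A.card ≤ (orb (f c * a)).card *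
              ((A * A).filter (fun h => h * (f c * a) = (f c * a) * h)).card := hkey _
          _ ≤ (orb (f c * a)).card * M :=
              Nat.mul_le_mul_left _ (hmax (f c) (hfX c hc))
    _ = (∑ c ∈ C, (orb (f c * a)).card) * M := by rw [sum_mul]
    _ = (C.biUnion (fun c => orb (f c * a))).card * M := by rw [card_biUnion hdisj]
    _ ≤ (A * X * {a} * A).card * M := by
        apply Nat.mul_le_mul_right
        apply card_le_card
        intro z hz
        rw [mem_biUnion] at hz
        obtain ⟨c, hc, hzc⟩ := hz
        exact hsub c hc hzc
end

section
/- Let q₀ ∈ V(Q) for Q = p^N with n₃ small: Suppose x ∈ h(O') decomposes as qx = h' + Σ_φ x_φ with h' ∈ h(O') ∩ t(K') and x_φ ∈ h(O') ∩ h_φ(K'), and Ad(g)(qx) − qx = Σ_φ (φ(g) − 1)x_φ = qq'y for some y ∈ h(O'). If also qy = Σ_φ y_φ with y_φ ∈ h(O') ∩ h_φ(K'), and |φ(g) − 1| > |q| for all φ, then x_φ ∈ (q'/q)·h(O') for every φ. -/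
open Finset
open scoped Pointwise

lemma indep_sum_eq_zero' {R M ι : Type*} [Ring R] [AddCommGroup M] [Module R M]
    [Fintype ι] {p : ι → Submodule R M} (h : iSupIndep p)
    (f : ι → M) (hf : ∀ i, f i ∈ p i) (hs : ∑ i, f i = 0) (i : ι) : f i = 0 := by
  classical
  have h1 : f i = -∑ j ∈ Finset.univ.erase i, f j := by
    have h2 := Finset.add_sum_erase Finset.univ f (Finset.mem_univ i)
    rw [hs] at h2
    rw [eq_neg_iff_add_eq_zero]
    exact h2
  have hmem : f i ∈ ⨆ (j) (_ : j ≠ i), p j := by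
    rw [h1]
    refine neg_mem (Submodule.sum_mem _ fun j hj => ?_)
    have hji : j ≠ i := (Finset.mem_erase.mp hj).1
    exact Submodule.mem_iSup_of_mem j (Submodule.mem_iSup_of_mem hji (hf j))
  exact (Submodule.mem_bot R).mp ((h i).le_bot ⟨hf i, hmem⟩)

/-- In the setting of an `O'`-lattice `h(O')` in `h(K') = t ⊕ ⊕_φ h_φ`,
suppose `qx = h' + Σ_φ x_φ` with `h' ∈ h(O') ∩ t(K')` and `x_φ ∈ h(O') ∩ h_φ(K')`, and
`Ad(g)(qx) − qx = Σ_φ (φ(g) − 1)x_φ = qq'y` for some `y ∈ h(O')`.  If also `qy = Σ_φ y_φ`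
with `y_φ ∈ h(O') ∩ h_φ(K')`, and `|φ(g) − 1| > |q|` for all `φ`, then
`x_φ ∈ (q'/q)·h(O')` for every `φ`. -/
theorem stmt17 {O' K' V : Type*} [CommRing O'] [IsDomain O'] [ValuationRing O']
    [Field K'] [Algebra O' K'] [IsFractionRing O' K']
    [AddCommGroup V] [Module K' V] [Module O' V] [IsScalarTower O' K' V]
    (L : Submodule O' V)            -- the lattice h(O')
    (t : Submodule K' V)            -- the torus part t(K')
    {Φ : Type*} [Fintype Φ]
    (hφ : Φ → Submodule K' V)       -- the weight spaces h_φ(K')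
    (hdecomp : t ⊔ (⨆ i, hφ i) = ⊤)
    (hindep : iSupIndep (fun o : Option Φ => o.elim t hφ))
    (φg : Φ → O')                   -- the scalars φ(g)
    (q q' rq : O') (hrq : q' = q * rq)      -- rq = q'/q
    (x y : V) (hx : x ∈ L) (hy : y ∈ L)
    (h' : V) (hh' : h' ∈ t.restrictScalars O' ⊓ L)
    (xφ yφ : Φ → V)
    (hxφL : ∀ i, xφ i ∈ (hφ i).restrictScalars O' ⊓ L)
    (hyφL : ∀ i, yφ i ∈ (hφ i).restrictScalars O' ⊓ L)
    (hsum : algebraMap O' K' q • x = h' + ∑ i, xφ i)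
    (hAd : (∑ i, algebraMap O' K' (φg i - 1) • xφ i) = algebraMap O' K' (q * q') • y)
    (hqy : algebraMap O' K' q • y = ∑ i, yφ i)
    (hreg : ∀ i, ∃ c : O', ¬ IsUnit c ∧ q = c * (φg i - 1)) :  -- |φ(g) − 1| > |q|
    ∀ i, xφ i ∈ rq • L := by
  classical
  intro i
  by_cases hq : q = 0
  · -- then qx = 0 = h' + Σ xφ, and by independence each xφ i = 0.
    have h0 : (0 : V) = h' + ∑ j, xφ j := by
      simpa [hq] using hsum
    set f : Option Φ → V := fun o => o.elim h' xφ with hf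
    have hsumf : ∑ o : Option Φ, f o = 0 := by
      rw [Fintype.sum_option]
      simp only [hf]
      exact h0.symm
    have hfmem : ∀ o : Option Φ, f o ∈ (fun o : Option Φ => o.elim t hφ) o := by
      rintro (_ | j)
      · exact (Submodule.mem_inf.mp hh').1
      · exact ((hxφL j).1 : xφ j ∈ (hφ j).restrictScalars O')
    have := indep_sum_eq_zero' hindep f hfmem hsumf (some i)
    have hxi0 : xφ i = 0 := this
    rw [hxi0]
    simpa using
      Submodule.smul_mem_pointwise_smul (0 : V) rq L L.zero_mem
  · -- q ≠ 0
    obtain ⟨c, -, hcd⟩ := hreg i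
    set d : O' := φg i - 1 with hd
    have hd0 : d ≠ 0 := fun h => hq (by rw [hcd, h, mul_zero])
    have hc0 : c ≠ 0 := fun h => hq (by rw [hcd, h, zero_mul])
    -- componentwise equality
    set g : Option Φ → V := fun o =>
      o.elim 0 (fun j => algebraMap O' K' (q * (φg j - 1)) • xφ j
        - algebraMap O' K' (q * q') • yφ j) with hg
    have hsumg : ∑ o : Option Φ, g o = 0 := by
      rw [Fintype.sum_option]
      show (0:V) + _ = 0
      rw [zero_add]
      show ∑ j, (algebraMap O' K' (q * (φg j - 1)) • xφ j - algebraMap O' K' (q * q') • yφ j) = 0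
      rw [Finset.sum_sub_distrib, sub_eq_zero]
      calc ∑ j, algebraMap O' K' (q * (φg j - 1)) • xφ j
          = algebraMap O' K' q • ∑ j, algebraMap O' K' (φg j - 1) • xφ j := by
            rw [Finset.smul_sum]
            refine Finset.sum_congr rfl fun j _ => ?_
            rw [map_mul, mul_smul]
        _ = algebraMap O' K' (q * q') • (algebraMap O' K' q • y) := by
            rw [hAd, smul_comm]
        _ = ∑ j, algebraMap O' K' (q * q') • yφ j := by
            rw [hqy, Finset.smul_sum]
    have hgmem : ∀ o : Option Φ, g o ∈ (fun o : Option Φ => o.elim t hφ) o := by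
      rintro (_ | j)
      · exact t.zero_mem
      · exact sub_mem ((hφ j).smul_mem _ (hxφL j).1) ((hφ j).smul_mem _ (hyφL j).1)
    have hcomp := indep_sum_eq_zero' hindep g hgmem hsumg (some i)
    have hkey : algebraMap O' K' (q * d) • xφ i = algebraMap O' K' (q * q') • yφ i := by
      have : g (some i) = 0 := hcomp
      simpa [hg, sub_eq_zero, hd] using this
    -- Now q * d = (c * d) * d and q * q' = (c*d)*d * (c * rq)
    have hinj : Function.Injective (algebraMap O' K') := IsFractionRing.injective O' K'
    have hu : algebraMap O' K' (q * d) ≠ 0 := by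
      rw [Ne, ← map_zero (algebraMap O' K'), hinj.eq_iff]
      exact mul_ne_zero hq hd0
    have hfact : q * q' = (q * d) * (c * rq) := by
      rw [hrq, hcd]; ring
    have hxieq : xφ i = (c * rq) • yφ i := by
      have h2 : algebraMap O' K' (q * d) • xφ i
          = algebraMap O' K' (q * d) • (algebraMap O' K' (c * rq) • yφ i) := by
        rw [hkey, hfact, map_mul, mul_smul]
      have h3 := smul_right_injective V hu h2
      rwa [algebraMap_smul] at h3
    rw [hxieq, mul_comm, mul_smul]
    exact Submodule.smul_mem_pointwise_smul _ rq L (L.smul_mem c (hyφL i).2)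
end
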